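/- Let P be a nonzero Nijenhuis operator on A_α that is homogeneous of degree c ≠ 0. Then P(x) = s·y for some s ∈ ℂ and P(y) = 0. -/

import Mathlib

open scoped TensorProduct

/-- A skew-symmetric bicharacter of an abelian group `G` over a field `k`. -/
structure Bicharacter (G : Type*) (k : Type*) [AddCommGroup G] [Field k] where
  ε : G → G → k
  ne_zero : ∀ a b : G, ε a b ≠ 0
  add_left : ∀ a b c : G, ε (a + b) c = ε a c * ε b c
  add_right : ∀ a b c : G, ε a (b + c) = ε a b * ε a c
  skew : ∀ a b : G, ε a b * ε b a = 1

/-- `(A, 𝒜, μ)` is a left-symmetric color algebra over `k` with respect to the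
skew-symmetric bicharacter `ε`: the grading `𝒜` is an internal direct sum
decomposition of `A`, the multiplication `μ` respects the grading, and the
left-symmetric color identity holds on homogeneous elements. -/
structure IsLSCA {G k A : Type*} [AddCommGroup G] [DecidableEq G] [Field k]
    [AddCommGroup A] [Module k A]
    (ε : Bicharacter G k) (𝒜 : G → Submodule k A) (μ : A →ₗ[k] A →ₗ[k] A) : Prop where
  internal : DirectSum.IsInternal 𝒜
  graded_mul : ∀ a b : G, ∀ x ∈ 𝒜 a, ∀ y ∈ 𝒜 b, μ x y ∈ 𝒜 (a + b)
  left_symm : ∀ a b c : G, ∀ x ∈ 𝒜 a, ∀ y ∈ 𝒜 b, ∀ z ∈ 𝒜 c,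
    μ (μ x y) z - μ x (μ y z) = ε.ε a b • (μ (μ y x) z - μ y (μ x z))

/-- `P` is a Nijenhuis operator on the left-symmetric color algebra `A`, homogeneous
of degree `c`:  `P(x)P(y) = ε(|P|+|x|,|P|) P(P(x)y) + P(x P(y)) − ε(|x|,|P|) P(P(xy))`
for all homogeneous `x, y`. -/
def IsNijenhuisOp {G k A : Type*} [AddCommGroup G] [Field k] [AddCommGroup A] [Module k A]
    (ε : Bicharacter G k) (𝒜 : G → Submodule k A) (μ : A →ₗ[k] A →ₗ[k] A)
    (c : G) (P : A →ₗ[k] A) : Prop :=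
  (∀ a : G, ∀ x ∈ 𝒜 a, P x ∈ 𝒜 (a + c)) ∧
  ∀ a b : G, ∀ x ∈ 𝒜 a, ∀ y ∈ 𝒜 b,
    μ (P x) (P y)
      = ε.ε (c + a) c • P (μ (P x) y) + P (μ x (P y)) - ε.ε a c • P (P (μ x y))

/-- `P` is a Rota-Baxter operator of weight `lam` on the left-symmetric color algebra
`A`, homogeneous of degree `c`:
`P(x)P(y) = ε(|P|+|x|,|P|) P(P(x)y) + P(x P(y)) + lam·P(xy)` for all homogeneous
`x, y`. -/
def IsRotaBaxterOp {G k A : Type*} [AddCommGroup G] [Field k] [AddCommGroup A] [Module k A]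
    (ε : Bicharacter G k) (𝒜 : G → Submodule k A) (μ : A →ₗ[k] A →ₗ[k] A)
    (c : G) (lam : k) (P : A →ₗ[k] A) : Prop :=
  (∀ a : G, ∀ x ∈ 𝒜 a, P x ∈ 𝒜 (a + c)) ∧
  ∀ a b : G, ∀ x ∈ 𝒜 a, ∀ y ∈ 𝒜 b,
    μ (P x) (P y)
      = ε.ε (c + a) c • P (μ (P x) y) + P (μ x (P y)) + lam • P (μ x y)

/-- If `P` is a nonzero Nijenhuis operator on the 2-dimensional
proper left-symmetric color algebra `A_α` over `ℂ`, homogeneous of degree `c ≠ 0`,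
then `P(x) = s·y` for some `s ∈ ℂ` and `P(y) = 0`. -/
theorem nijenhuis_nonzero_degree_on_Aalpha {G : Type*} [AddCommGroup G] [DecidableEq G]
    (a b : G) (hab : a + a = b) (hne : a ≠ b) (ha : a ≠ 0) (hb : b ≠ 0)
    (ε : Bicharacter G ℂ)
    {A : Type*} [AddCommGroup A] [Module ℂ A]
    (x y : A) (hind : LinearIndependent ℂ ![x, y])
    (hspan : Submodule.span ℂ {x, y} = ⊤)
    (𝒜 : G → Submodule ℂ A)
    (h𝒜a : 𝒜 a = Submodule.span ℂ {x}) (h𝒜b : 𝒜 b = Submodule.span ℂ {y})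
    (h𝒜 : ∀ g : G, g ≠ a → g ≠ b → 𝒜 g = ⊥)
    (α : ℂ) (hα : α ≠ 0)
    (μ : A →ₗ[ℂ] A →ₗ[ℂ] A)
    (hxx : μ x x = α • y) (hxy : μ x y = 0) (hyx : μ y x = 0) (hyy : μ y y = 0)
    (c : G) (hc : c ≠ 0) (P : A →ₗ[ℂ] A) (hPne : P ≠ 0)
    (hP : IsNijenhuisOp ε 𝒜 μ c P) :
    (∃ s : ℂ, P x = s • y) ∧ P y = 0 := by
  obtain ⟨hPgr, hPnij⟩ := hP
  have hx : x ∈ 𝒜 a := by rw [h𝒜a]; exact Submodule.mem_span_singleton_self x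
  have hy : y ∈ 𝒜 b := by rw [h𝒜b]; exact Submodule.mem_span_singleton_self y
  have hyne : y ≠ 0 := by simpa using hind.ne_zero 1
  have hPx := hPgr a x hx
  have hPy := hPgr b y hy
  by_cases hcase : a + c = b
  · -- c = a, so P x ∈ span {y} and P y = 0
    have hca : c = a := add_left_cancel (hcase.trans hab.symm)
    rw [hcase, h𝒜b, Submodule.mem_span_singleton] at hPx
    obtain ⟨s, hs⟩ := hPx
    have hbc : 𝒜 (b + c) = ⊥ := by
      apply h𝒜
      · intro h
        exact hb (by rwa [hca, add_eq_right] at h)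
      · intro h
        exact ha (by rwa [hca, add_eq_left] at h)
    rw [hbc, Submodule.mem_bot] at hPy
    exact ⟨⟨s, hs.symm⟩, hPy⟩
  · -- a + c ≠ b, so P x = 0; then P y ≠ 0 forces b + c = a and we get a contradiction
    exfalso
    have hac : 𝒜 (a + c) = ⊥ := by
      apply h𝒜 _ _ hcase
      intro h
      exact hc (add_eq_left.mp h)
    rw [hac, Submodule.mem_bot] at hPx
    have hPy0 : P y ≠ 0 := by
      intro h0
      apply hPne
      apply LinearMap.ext_on hspan
      intro z hz
      rcases hz with rfl | hz
      · simpa using hPx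
      · simp only [Set.mem_singleton_iff] at hz
        subst hz
        simpa using h0
    have hbca : b + c = a := by
      by_contra hbca
      have : 𝒜 (b + c) = ⊥ := by
        apply h𝒜 _ hbca
        intro h
        exact hc (add_eq_left.mp h)
      rw [this, Submodule.mem_bot] at hPy
      exact hPy0 hPy
    rw [hbca, h𝒜a, Submodule.mem_span_singleton] at hPy
    obtain ⟨t, ht⟩ := hPy
    have htne : t ≠ 0 := by
      intro h0
      apply hPy0
      rw [← ht, h0, zero_smul]
    have heq := hPnij b b y hy y hy
    rw [← ht] at heq
    simp only [map_smul, LinearMap.smul_apply, hxy, hyx, hyy, smul_zero, map_zero] at heq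
    rw [hxx] at heq
    have : t • t • α • y = 0 := by
      rw [heq]; simp
    have := smul_eq_zero.mp this
    rcases this with h | h
    · exact htne h
    rcases smul_eq_zero.mp h with h | h
    · exact htne h
    rcases smul_eq_zero.mp h with h | h
    · exact hα h
    · exact hyne h
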